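/- Let β be a mixed base, m ≥ 1, X ∈ ℕ^m, n = σ_β(X) the base-β Nim sum of X, and h < n. Let N = max{L : n_L ≠ h_L} (digits in base β). Then there exists C ∈ ℕ^m with X - C ∈ ℕ^m componentwise, σ_β(X - C) = h, and moreover c^i < β̂_{N+1} for all i (i.e., C only affects digits up to N). -/

import Mathlib

open scoped BigOperators

/-- β̂_L = β_0 ⋯ β_{L-1}, the place value of digit L in mixed base β. -/
def bhat (β : ℕ → ℕ) (L : ℕ) : ℕ := ∏ i ∈ Finset.range L, β i

/-- The L-th digit of n in the mixed base β. -/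
def mdigit (β : ℕ → ℕ) (n L : ℕ) : ℕ := n / bhat β L % β L

/-- Digit-wise addition modulo β_L in mixed base β. -/
def moplus (β : ℕ → ℕ) (n h : ℕ) : ℕ :=
  ∑ L ∈ Finset.range (n + h + 1), ((mdigit β n L + mdigit β h L) % β L) * bhat β L

/-- Digit-wise subtraction modulo β_L in mixed base β. -/
def mominus (β : ℕ → ℕ) (n h : ℕ) : ℕ :=
  ∑ L ∈ Finset.range (n + h + 1), ((β L + mdigit β n L - mdigit β h L) % β L) * bhat β L

/-- σ_β(X) = x^0 ⊕ ⋯ ⊕ x^{m-1}: the digit-wise Nim sum in mixed base β. -/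
def msigma (β : ℕ → ℕ) {m : ℕ} (X : Fin m → ℕ) : ℕ :=
  ∑ L ∈ Finset.range (∑ i, X i + 1), ((∑ i, mdigit β (X i) L) % β L) * bhat β L

/-- Hamming weight: number of nonzero components. -/
def hamwt {m : ℕ} (C : Fin m → ℕ) : ℕ := (Finset.univ.filter (fun i => C i ≠ 0)).card

/-- ord_β(n): the largest L with β̂_L ∣ n (⊤ for n = 0). -/
def mord (β : ℕ → ℕ) (n : ℕ) : ℕ∞ :=
  if n = 0 then ⊤ else (Nat.findGreatest (fun L => bhat β L ∣ n) n : ℕ∞)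

/-- 𝒞 is a Sprague-Grundy system of σ_β: its members are nonzero moves and
σ_β satisfies the mex recursion of the take-away game Γ(ℕ^m, 𝒞), i.e. σ_β is the
Sprague-Grundy function of that game. -/
def IsSGSystem (β : ℕ → ℕ) {m : ℕ} (𝒞 : Set (Fin m → ℕ)) : Prop :=
  (∀ C ∈ 𝒞, C ≠ 0) ∧
  ∀ X : Fin m → ℕ, msigma β X =
    sInf {n : ℕ | ∀ C ∈ 𝒞, (∀ i, C i ≤ X i) → msigma β (fun i => X i - C i) ≠ n}

section aux
variable (β : ℕ → ℕ)

lemma bhat_succ (L : ℕ) : bhat β (L+1) = bhat β L * β L := Finset.prod_range_succ _ _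

lemma bhat_pos (hβ : ∀ L, 2 ≤ β L) (L : ℕ) : 0 < bhat β L :=
  Finset.prod_pos (fun i _ => lt_of_lt_of_le two_pos (hβ i))

lemma lt_bhat (hβ : ∀ L, 2 ≤ β L) (L : ℕ) : L < bhat β L := by
  have h1 : 2 ^ L ≤ bhat β L := by
    calc 2 ^ L = ∏ _i ∈ Finset.range L, 2 := by simp
    _ ≤ bhat β L := Finset.prod_le_prod (fun i _ => by norm_num) (fun i _ => hβ i)
  exact lt_of_lt_of_le (Nat.lt_two_pow_self (n := L)) h1

lemma bhat_mono (hβ : ∀ L, 2 ≤ β L) : Monotone (bhat β) := by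
  apply monotone_nat_of_le_succ
  intro L
  rw [bhat_succ]
  exact Nat.le_mul_of_pos_right _ (by linarith [hβ L])

lemma mdigit_lt (hβ : ∀ L, 2 ≤ β L) (x L : ℕ) : mdigit β x L < β L :=
  Nat.mod_lt _ (by linarith [hβ L])

lemma mdigit_eq_zero (hβ : ∀ L, 2 ≤ β L) {x L : ℕ} (h : x < bhat β L) : mdigit β x L = 0 := by
  unfold mdigit
  rw [Nat.div_eq_of_lt h, Nat.zero_mod]

lemma bhat_shift (L : ℕ) : bhat β (L+1) = bhat (fun i => β (i+1)) L * β 0 :=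
  Finset.prod_range_succ' _ _

lemma mdigit_shift (hβ : ∀ L, 2 ≤ β L) (x L : ℕ) :
    mdigit β x (L+1) = mdigit (fun i => β (i+1)) (x / β 0) L := by
  unfold mdigit
  rw [bhat_shift, Nat.div_div_eq_div_mul, Nat.mul_comm]

lemma val_lt (c : ℕ → ℕ) (hc : ∀ i, c i < β i) (K : ℕ) :
    ∑ i ∈ Finset.range K, c i * bhat β i < bhat β K := by
  induction K with
  | zero => simp [bhat]
  | succ K ih =>
    rw [Finset.sum_range_succ, bhat_succ]
    have h1 : c K + 1 ≤ β K := hc K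
    calc ∑ i ∈ Finset.range K, c i * bhat β i + c K * bhat β K
        < bhat β K + c K * bhat β K := by omega
      _ = (c K + 1) * bhat β K := by ring
      _ ≤ β K * bhat β K := Nat.mul_le_mul_right _ h1
      _ = bhat β K * β K := Nat.mul_comm _ _

end aux

lemma digit_of_val : ∀ (L : ℕ) (β : ℕ → ℕ), (∀ i, 2 ≤ β i) → ∀ (c : ℕ → ℕ),
    (∀ i, c i < β i) → ∀ K, L < K →
    mdigit β (∑ i ∈ Finset.range K, c i * bhat β i) L = c L := by
  intro L
  induction L with
  | zero =>
    intro β hβ c hc K hK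
    obtain ⟨K, rfl⟩ := Nat.exists_eq_succ_of_ne_zero (by omega : K ≠ 0)
    rw [Finset.sum_range_succ']
    have hdvd : β 0 ∣ ∑ i ∈ Finset.range K, c (i+1) * bhat β (i+1) :=
      Finset.dvd_sum (fun i _ => by rw [bhat_shift]; exact ⟨c (i+1) * bhat (fun k => β (k+1)) i, by ring⟩)
    obtain ⟨q, hq⟩ := hdvd
    unfold mdigit
    have hb0 : bhat β 0 = 1 := by simp [bhat]
    rw [hb0, Nat.div_one, hq]
    simp [Nat.mul_add_mod, Nat.mod_eq_of_lt (hc 0), bhat, Nat.add_comm]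
  | succ L ih =>
    intro β hβ c hc K hK
    obtain ⟨K, rfl⟩ := Nat.exists_eq_succ_of_ne_zero (by omega : K ≠ 0)
    rw [Finset.sum_range_succ', mdigit_shift β hβ]
    have hb0 : bhat β 0 = 1 := by simp [bhat]
    have hterm : ∀ i, c (i+1) * bhat β (i+1) = (c (i+1) * bhat (fun k => β (k+1)) i) * β 0 := by
      intro i; rw [bhat_shift]; ring
    have hrw : ∑ i ∈ Finset.range K, c (i+1) * bhat β (i+1)
        = (∑ i ∈ Finset.range K, c (i+1) * bhat (fun k => β (k+1)) i) * β 0 := by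
      rw [Finset.sum_mul]; exact Finset.sum_congr rfl (fun i _ => hterm i)
    rw [hrw, hb0, Nat.mul_one]
    have hdiv : (( ∑ i ∈ Finset.range K, c (i+1) * bhat (fun k => β (k+1)) i) * β 0 + c 0) / β 0
        = ∑ i ∈ Finset.range K, c (i+1) * bhat (fun k => β (k+1)) i := by
      rw [Nat.mul_comm, Nat.mul_add_div (by linarith [hβ 0] : 0 < β 0),
        Nat.div_eq_of_lt (hc 0), Nat.add_zero]
    rw [hdiv]
    exact ih _ (fun i => hβ (i+1)) _ (fun i => hc (i+1)) K (by omega)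

lemma val_of_digits : ∀ (K : ℕ) (β : ℕ → ℕ), (∀ i, 2 ≤ β i) → ∀ x, x < bhat β K →
    ∑ L ∈ Finset.range K, mdigit β x L * bhat β L = x := by
  intro K
  induction K with
  | zero =>
    intro β hβ x hx
    simp only [bhat, Finset.range_zero, Finset.prod_empty] at hx
    interval_cases x
    simp
  | succ K ih =>
    intro β hβ x hx
    have hb0 : 0 < β 0 := by linarith [hβ 0]
    rw [Finset.sum_range_succ']
    have hrw : ∀ L, mdigit β x (L+1) * bhat β (L+1)
        = (mdigit (fun i => β (i+1)) (x / β 0) L * bhat (fun i => β (i+1)) L) * β 0 := by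
      intro L; rw [mdigit_shift β hβ, bhat_shift]; ring
    have hb0' : bhat β 0 = 1 := by simp [bhat]
    have hm0 : mdigit β x 0 = x % β 0 := by unfold mdigit; rw [hb0', Nat.div_one]
    rw [Finset.sum_congr rfl (fun L _ => hrw L), ← Finset.sum_mul, hm0, hb0', Nat.mul_one]
    have hxd : x / β 0 < bhat (fun i => β (i+1)) K := by
      rw [Nat.div_lt_iff_lt_mul hb0]
      calc x < bhat β (K+1) := hx
        _ = bhat (fun i => β (i+1)) K * β 0 := bhat_shift β K
    rw [ih _ (fun i => hβ (i+1)) _ hxd, Nat.mul_comm, Nat.div_add_mod]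

lemma eq_of_mdigit_eq (β : ℕ → ℕ) (hβ : ∀ L, 2 ≤ β L) {x y : ℕ}
    (h : ∀ L, mdigit β x L = mdigit β y L) : x = y := by
  set K := x + y + 1 with hK
  have hx : x < bhat β K := lt_of_le_of_lt (by omega) (lt_bhat β hβ K)
  have hy : y < bhat β K := lt_of_le_of_lt (by omega) (lt_bhat β hβ K)
  rw [← val_of_digits K β hβ x hx, ← val_of_digits K β hβ y hy]
  exact Finset.sum_congr rfl (fun L _ => by rw [h L])

lemma msigma_eq_val (β : ℕ → ℕ) (hβ : ∀ L, 2 ≤ β L) {m : ℕ} (X : Fin m → ℕ)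
    (K : ℕ) (hK : ∑ i, X i + 1 ≤ K) :
    msigma β X = ∑ L ∈ Finset.range K, ((∑ i, mdigit β (X i) L) % β L) * bhat β L := by
  unfold msigma
  apply Finset.sum_subset (Finset.range_subset_range.mpr hK)
  intro L _ hL
  rw [Finset.mem_range, not_lt] at hL
  have hz : ∀ i : Fin m, mdigit β (X i) L = 0 := by
    intro i
    apply mdigit_eq_zero β hβ
    have h1 : X i ≤ ∑ k, X k := Finset.single_le_sum (f := X) (fun k _ => Nat.zero_le _) (Finset.mem_univ i)
    have h2 : L < bhat β L := lt_bhat β hβ L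
    omega
  simp [hz]

lemma mdigit_msigma (β : ℕ → ℕ) (hβ : ∀ L, 2 ≤ β L) {m : ℕ} (X : Fin m → ℕ) (L : ℕ) :
    mdigit β (msigma β X) L = (∑ i, mdigit β (X i) L) % β L := by
  rw [msigma_eq_val β hβ X (∑ i, X i + L + 2) (by omega)]
  exact digit_of_val L β hβ _ (fun i => Nat.mod_lt _ (by linarith [hβ i])) _ (by omega)

lemma val_le_val (β : ℕ → ℕ) (hβ : ∀ L, 2 ≤ β L) (c d : ℕ → ℕ)
    (hc : ∀ i, c i < β i) (K N : ℕ) (hNK : N < K)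
    (hhigh : ∀ L, N < L → L < K → c L = d L) (hdN : c N < d N) :
    ∑ L ∈ Finset.range K, c L * bhat β L ≤ ∑ L ∈ Finset.range K, d L * bhat β L := by
  have hsplit : ∀ e : ℕ → ℕ, ∑ L ∈ Finset.range K, e L * bhat β L
      = ∑ L ∈ Finset.range (N+1), e L * bhat β L + ∑ L ∈ Finset.Ico (N+1) K, e L * bhat β L := by
    intro e
    rw [Finset.range_eq_Ico, ← Finset.sum_Ico_consecutive _ (Nat.zero_le _) (by omega : N+1 ≤ K), ← Finset.range_eq_Ico]
  rw [hsplit c, hsplit d]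
  have htail : ∑ L ∈ Finset.Ico (N+1) K, c L * bhat β L = ∑ L ∈ Finset.Ico (N+1) K, d L * bhat β L := by
    apply Finset.sum_congr rfl
    intro L hL
    rw [Finset.mem_Ico] at hL
    rw [hhigh L (by omega) hL.2]
  have hhead : ∑ L ∈ Finset.range (N+1), c L * bhat β L ≤ ∑ L ∈ Finset.range (N+1), d L * bhat β L := by
    rw [Finset.sum_range_succ, Finset.sum_range_succ]
    have h1 : ∑ L ∈ Finset.range N, c L * bhat β L < bhat β N := val_lt β c hc N
    have h2 : c N * bhat β N + bhat β N ≤ d N * bhat β N := by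
      have h3 : (c N + 1) * bhat β N ≤ d N * bhat β N := Nat.mul_le_mul_right _ (by omega)
      have h4 : (c N + 1) * bhat β N = c N * bhat β N + bhat β N := by ring
      omega
    omega
  omega

lemma exists_sub {m : ℕ} (f : Fin m → ℕ) (t : ℕ) (ht : t ≤ ∑ i, f i) :
    ∃ g : Fin m → ℕ, (∀ i, g i ≤ f i) ∧ ∑ i, g i = t := by
  induction t with
  | zero => exact ⟨0, fun i => Nat.zero_le _, by simp⟩
  | succ t ih =>
    obtain ⟨g, hg, hsum⟩ := ih (by omega)
    have hex : ∃ i, g i < f i := by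
      by_contra hcon
      push_neg at hcon
      have : ∑ i, f i ≤ ∑ i, g i := Finset.sum_le_sum (fun i _ => hcon i)
      omega
    obtain ⟨i, hi⟩ := hex
    refine ⟨Function.update g i (g i + 1), ?_, ?_⟩
    · intro k
      by_cases hk : k = i
      · subst hk; rw [Function.update_self]; omega
      · rw [Function.update_of_ne hk]; exact hg k
    · rw [Finset.sum_update_of_mem (Finset.mem_univ i)]
      have : ∑ k, g k = g i + ∑ k ∈ Finset.univ \ {i}, g k := by
        rw [← Finset.sum_update_of_mem (Finset.mem_univ i) g (g i)]
        congr 1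
        exact funext (fun k => by by_cases hk : k = i <;> simp [hk])
      omega

/-- Adequate covering: for h < σ_β(X) there is a move C with σ_β(X - C) = h,
and C only affects digits up to N = max{L : n_L ≠ h_L}. -/
theorem stmt3 (β : ℕ → ℕ) (hβ : ∀ L, 2 ≤ β L) {m : ℕ} (hm : 1 ≤ m)
    (X : Fin m → ℕ) (n h N : ℕ) (hn : n = msigma β X) (hh : h < n)
    (hN : mdigit β n N ≠ mdigit β h N)
    (hNmax : ∀ L, N < L → mdigit β n L = mdigit β h L) :
    ∃ C : Fin m → ℕ, (∀ i, C i ≤ X i) ∧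
      msigma β (fun i => X i - C i) = h ∧ ∀ i, C i < bhat β (N + 1) := by
  classical
  have hβpos : ∀ L, 0 < β L := fun L => by linarith [hβ L]
  have hdig_n : ∀ L, mdigit β n L = (∑ i, mdigit β (X i) L) % β L := fun L => by
    rw [hn]; exact mdigit_msigma β hβ X L
  set K := (∑ i, X i) + n + h + 1 with hKdef
  have hXK : ∀ i, X i < bhat β K := by
    intro i
    have h1 : X i ≤ ∑ k, X k :=
      Finset.single_le_sum (f := X) (fun k _ => Nat.zero_le _) (Finset.mem_univ i)
    have h2 := lt_bhat β hβ K
    omega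
  have hnK : n < bhat β K := by have := lt_bhat β hβ K; omega
  have hhK : h < bhat β K := by have := lt_bhat β hβ K; omega
  have hNK : N < K := by
    by_contra hcon
    push_neg at hcon
    have hb : bhat β K ≤ bhat β N := bhat_mono β hβ hcon
    have h1 : mdigit β n N = 0 := mdigit_eq_zero β hβ (by omega)
    have h2 : mdigit β h N = 0 := mdigit_eq_zero β hβ (by omega)
    exact hN (h1.trans h2.symm)
  have hlt : mdigit β h N < mdigit β n N := by
    by_contra hcon
    have h1 : mdigit β n N < mdigit β h N := lt_of_le_of_ne (le_of_not_gt hcon) hN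
    have hle : n ≤ h := by
      rw [← val_of_digits K β hβ n hnK, ← val_of_digits K β hβ h hhK]
      exact val_le_val β hβ _ _ (fun L => mdigit_lt β hβ n L) K N hNK
        (fun L hL _ => hNmax L hL) h1
    omega
  set t := mdigit β n N - mdigit β h N with ht
  have ht1 : 1 ≤ t := by omega
  have htle : t ≤ ∑ i, mdigit β (X i) N := by
    have h1 := hdig_n N
    have h2 : (∑ i, mdigit β (X i) N) % β N ≤ ∑ i, mdigit β (X i) N := Nat.mod_le _ _
    omega
  obtain ⟨g, hg, hgsum⟩ := exists_sub (fun i => mdigit β (X i) N) t htle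
  have hex : ∃ j, g j ≠ 0 := by
    by_contra hcon
    push_neg at hcon
    have : ∑ i, g i = 0 := Finset.sum_eq_zero (fun i _ => hcon i)
    omega
  obtain ⟨j, hj⟩ := hex
  set s : ℕ → ℕ := fun L => ∑ i ∈ Finset.univ.erase j, mdigit β (X i) L with hs
  set w : ℕ → ℕ := fun L => (mdigit β h L + (β L - s L % β L)) % β L with hw
  set c : Fin m → ℕ → ℕ := fun i L =>
    if L = N then mdigit β (X i) N - g i
    else if i = j ∧ L < N then w L
    else mdigit β (X i) L with hcdef
  have hclt : ∀ i L, c i L < β L := by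
    intro i L
    simp only [hcdef]
    by_cases h1 : L = N
    · subst h1
      rw [if_pos rfl]
      have := mdigit_lt β hβ (X i) L
      omega
    · rw [if_neg h1]
      by_cases h2 : i = j ∧ L < N
      · rw [if_pos h2]
        simp only [hw]
        exact Nat.mod_lt _ (hβpos L)
      · rw [if_neg h2]
        exact mdigit_lt β hβ (X i) L
  have hch : ∀ i L, N < L → c i L = mdigit β (X i) L := by
    intro i L hL
    simp only [hcdef]
    rw [if_neg (by omega), if_neg (by rintro ⟨-, h2⟩; omega)]
  set X' : Fin m → ℕ := fun i => ∑ L ∈ Finset.range K, c i L * bhat β L with hX'def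
  have hdigX'lt : ∀ (i : Fin m) L, L < K → mdigit β (X' i) L = c i L := by
    intro i L hL
    simp only [hX'def]
    exact digit_of_val L β hβ _ (hclt i) K hL
  have hX'lt : ∀ i, X' i < bhat β K := fun i => val_lt β _ (hclt i) K
  have hXrep : ∀ i, X i = ∑ L ∈ Finset.range K, mdigit β (X i) L * bhat β L :=
    fun i => (val_of_digits K β hβ _ (hXK i)).symm
  have hle : ∀ i, X' i ≤ X i := by
    intro i
    by_cases hij : i = j
    · subst hij
      rw [hXrep i]
      simp only [hX'def]
      apply val_le_val β hβ (c i) _ (hclt i) K N hNK (fun L hL _ => hch i L hL)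
      have h1 : c i N = mdigit β (X i) N - g i := by simp [hcdef]
      have h2 : g i ≤ mdigit β (X i) N := hg i
      omega
    · rw [hXrep i]
      simp only [hX'def]
      apply Finset.sum_le_sum
      intro L _
      apply Nat.mul_le_mul_right
      simp only [hcdef]
      by_cases h1 : L = N
      · subst h1; rw [if_pos rfl]; omega
      · rw [if_neg h1, if_neg (by rintro ⟨h2, -⟩; exact hij h2)]
  have hCb : ∀ i, X i - X' i < bhat β (N + 1) := by
    intro i
    have hsplitc : X' i = ∑ L ∈ Finset.range (N+1), c i L * bhat β L
        + ∑ L ∈ Finset.Ico (N+1) K, c i L * bhat β L := by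
      simp only [hX'def]
      rw [Finset.range_eq_Ico, ← Finset.sum_Ico_consecutive _ (Nat.zero_le _) (by omega : N+1 ≤ K), ← Finset.range_eq_Ico]
    have hsplitd : X i = ∑ L ∈ Finset.range (N+1), mdigit β (X i) L * bhat β L
        + ∑ L ∈ Finset.Ico (N+1) K, mdigit β (X i) L * bhat β L := by
      have hsum0 : ∑ L ∈ Finset.range K, mdigit β (X i) L * bhat β L
          = ∑ L ∈ Finset.range (N+1), mdigit β (X i) L * bhat β L
          + ∑ L ∈ Finset.Ico (N+1) K, mdigit β (X i) L * bhat β L := by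
        rw [Finset.range_eq_Ico,
          ← Finset.sum_Ico_consecutive _ (Nat.zero_le _) (by omega : N+1 ≤ K), ← Finset.range_eq_Ico]
      exact (hXrep i).trans hsum0
    have htails : ∑ L ∈ Finset.Ico (N+1) K, c i L * bhat β L
        = ∑ L ∈ Finset.Ico (N+1) K, mdigit β (X i) L * bhat β L := by
      apply Finset.sum_congr rfl
      intro L hL
      rw [Finset.mem_Ico] at hL
      rw [hch i L (by omega)]
    have hA : ∑ L ∈ Finset.range (N+1), mdigit β (X i) L * bhat β L < bhat β (N+1) :=
      val_lt β _ (fun L => mdigit_lt β hβ (X i) L) (N+1)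
    omega
  have hmain : msigma β X' = h := by
    apply eq_of_mdigit_eq β hβ
    intro L
    rw [mdigit_msigma β hβ X' L]
    by_cases hLK : L < K
    · rw [Finset.sum_congr rfl (fun i _ => hdigX'lt i L hLK)]
      rcases lt_trichotomy L N with h1 | h1 | h1
      · -- L < N
        have hsum : ∑ i, c i L = w L + s L := by
          rw [← Finset.add_sum_erase _ _ (Finset.mem_univ j)]
          congr 1
          · simp [hcdef, Nat.ne_of_lt h1, h1]
          · apply Finset.sum_congr rfl
            intro i hi
            have hij : i ≠ j := Finset.ne_of_mem_erase hi
            simp [hcdef, Nat.ne_of_lt h1, hij]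
        rw [hsum]
        have hr : s L % β L < β L := Nat.mod_lt _ (hβpos L)
        have hb : mdigit β h L < β L := mdigit_lt β hβ h L
        have e1 : w L % β L = w L := by
          simp only [hw]
          exact Nat.mod_mod_of_dvd _ dvd_rfl
        have e2 : (w L + s L) % β L = (w L + s L % β L) % β L := by
          conv_lhs => rw [Nat.add_mod]
          rw [e1]
        rw [e2]
        simp only [hw]
        rw [Nat.mod_add_mod]
        have h3 : mdigit β h L + (β L - s L % β L) + s L % β L = mdigit β h L + β L := by omega
        rw [h3, Nat.add_mod_right, Nat.mod_eq_of_lt hb]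
      · -- L = N
        subst h1
        have hsum : ∑ i, c i L = ∑ i, mdigit β (X i) L - t := by
          have h2 : ∀ i : Fin m, c i L = mdigit β (X i) L - g i := by
            intro i
            simp [hcdef]
          rw [Finset.sum_congr rfl (fun i _ => h2 i)]
          have h3 : ∑ i, (mdigit β (X i) L - g i) + ∑ i, g i = ∑ i, mdigit β (X i) L := by
            rw [← Finset.sum_add_distrib]
            exact Finset.sum_congr rfl (fun i _ => by have := hg i; omega)
          omega
        rw [hsum]
        have hbN : mdigit β h L < β L := mdigit_lt β hβ h L
        have hdigN := hdig_n L
        have h5 := Nat.div_add_mod (∑ i, mdigit β (X i) L) (β L)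
        have h4 : ∑ i, mdigit β (X i) L - t
            = β L * ((∑ i, mdigit β (X i) L) / β L) + mdigit β h L := by
          generalize β L * ((∑ i, mdigit β (X i) L) / β L) = q at h5 ⊢
          omega
        rw [h4, Nat.mul_add_mod, Nat.mod_eq_of_lt hbN]
      · -- N < L
        rw [Finset.sum_congr rfl (fun i _ => hch i L h1), ← hdig_n L]
        exact hNmax L h1
    · have h1 : ∀ i : Fin m, mdigit β (X' i) L = 0 := fun i =>
        mdigit_eq_zero β hβ (lt_of_lt_of_le (hX'lt i) (bhat_mono β hβ (by omega)))
      have h2 : mdigit β h L = 0 :=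
        mdigit_eq_zero β hβ (lt_of_lt_of_le hhK (bhat_mono β hβ (by omega)))
      rw [h2, Finset.sum_congr rfl (fun i _ => h1 i)]
      simp
  refine ⟨fun i => X i - X' i, fun i => Nat.sub_le _ _, ?_, hCb⟩
  have hfun : (fun i => X i - (X i - X' i)) = X' := funext fun i => by have := hle i; omega
  rw [hfun]
  exact hmain
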